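/- Let n₁, n₂ ≥ 1 and fix an edge e = {a,b} of the complete bipartite graph K_{n₁,n₂}. The number X of acyclic orientations of K_{n₁,n₂} that remain acyclic when the direction of e is reversed equals 1 + ∑_{k=2}^{min(n₁,n₂)+1} ((k−2)!)² · [ (2k−3)·S(n₁+1,k)·S(n₂+1,k) − (k−2)·(S(n₁+1,k)·S(n₂,k) + S(n₁,k)·S(n₂+1,k)) − S(n₁,k)·S(n₂,k) ]. -/

import Mathlib

/-- An orientation of a simple graph `G`, encoded as a function `f` where `f u v = true`
means the edge `{u,v}` is directed from `u` to `v`. Every edge gets exactly one direction,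
and non-edges carry no direction. -/
def IsOrientation {V : Type*} (G : SimpleGraph V) (f : V → V → Bool) : Prop :=
  (∀ u v, G.Adj u v → f u v = !f v u) ∧ ∀ u v, ¬ G.Adj u v → f u v = false

/-- The directed graph given by `f` contains no directed cycle. -/
def OrientAcyclic {V : Type*} (f : V → V → Bool) : Prop :=
  ∀ v, ¬ Relation.TransGen (fun a b => f a b = true) v v

/-- The number of acyclic orientations of `G`. -/
noncomputable def numAcyclicOrientations {V : Type*} (G : SimpleGraph V) : ℕ :=
  Nat.card {f : V → V → Bool // IsOrientation G f ∧ OrientAcyclic f}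

/-- The Stirling number of the second kind `S(n,k)`: the number of partitions of an
`n`-element set into `k` non-empty parts. -/
noncomputable def stirling2 (n k : ℕ) : ℕ :=
  Nat.card {P : Finpartition (Finset.univ : Finset (Fin n)) // P.parts.card = k}

/-- Reverse the direction of the single edge `{x,y}` in the orientation `f`. -/
def flipEdge {V : Type*} [DecidableEq V] (f : V → V → Bool) (x y : V) : V → V → Bool :=
  fun u v => if (u = x ∧ v = y) ∨ (u = y ∧ v = x) then !f u v else f u v

open Finset

set_option linter.unusedSectionVars false

lemma nat_card_sigma {ι : Type*} [Fintype ι] (F : ι → Type*) [∀ i, Finite (F i)] :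
    Nat.card (Σ i, F i) = ∑ i, Nat.card (F i) := by
  classical
  letI : ∀ i, Fintype (F i) := fun i => Fintype.ofFinite _
  simp [Nat.card_eq_fintype_card, Fintype.card_sigma]

lemma card_surj (N K : ℕ) :
    Nat.card {g : Fin N → Fin K // Function.Surjective g} =
      K.factorial * stirling2 N K := by
  classical
  set PK := {P : Finpartition (Finset.univ : Finset (Fin N)) // P.parts.card = K} with hPK
  -- the map from (partition, labeling) to surjections
  let Ψ : (Σ P : PK, ({x // x ∈ P.val.parts} ≃ Fin K)) →
      {g : Fin N → Fin K // Function.Surjective g} :=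
    fun x => ⟨fun v => x.2 ⟨x.1.val.part v, x.1.val.part_mem.mpr (mem_univ v)⟩, by
      obtain ⟨⟨Q, hQ⟩, e⟩ := x
      intro j
      obtain ⟨v, hv⟩ := Q.nonempty_of_mem_parts (e.symm j).2
      refine ⟨v, ?_⟩
      have h2 : (⟨Q.part v, Q.part_mem.mpr (mem_univ v)⟩ : {x // x ∈ Q.parts}) = e.symm j :=
        Subtype.ext (Q.part_eq_of_mem (e.symm j).2 hv)
      show e ⟨Q.part v, Q.part_mem.mpr (mem_univ v)⟩ = j
      rw [h2]
      exact e.apply_symm_apply j⟩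
  have hinj : Function.Injective Ψ := by
    rintro ⟨⟨P, hP⟩, e⟩ ⟨⟨P', hP'⟩, e'⟩ h
    have hg : ∀ v, (e ⟨P.part v, P.part_mem.mpr (mem_univ v)⟩ : Fin K)
        = e' ⟨P'.part v, P'.part_mem.mpr (mem_univ v)⟩ := by
      intro v; exact congrFun (congrArg Subtype.val h) v
    -- parts agree
    have key : ∀ (Q Q' : Finpartition (Finset.univ : Finset (Fin N)))
        (f : {x // x ∈ Q.parts} ≃ Fin K) (f' : {x // x ∈ Q'.parts} ≃ Fin K),
        (∀ v, (f ⟨Q.part v, Q.part_mem.mpr (mem_univ v)⟩ : Fin K)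
          = f' ⟨Q'.part v, Q'.part_mem.mpr (mem_univ v)⟩) →
        ∀ p ∈ Q.parts, p ∈ Q'.parts := by
      intro Q Q' f f' hfg p hp
      obtain ⟨v, hv⟩ := Q.nonempty_of_mem_parts hp
      have hpv : Q.part v = p := Q.part_eq_of_mem hp hv
      have : p = Q'.part v := by
        ext y
        constructor
        · intro hy
          have h1 : Q.part y = Q.part v := by
            rw [hpv, Q.part_eq_of_mem hp hy]
          have h2 : (f' ⟨Q'.part y, Q'.part_mem.mpr (mem_univ y)⟩ : Fin K)
              = f' ⟨Q'.part v, Q'.part_mem.mpr (mem_univ v)⟩ := by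
            rw [← hfg y, ← hfg v]
            exact congrArg f (Subtype.ext h1)
          have h3 : Q'.part y = Q'.part v := congrArg Subtype.val (f'.injective h2)
          rw [← h3]; exact Q'.mem_part (mem_univ y)
        · intro hy
          have h3 : Q'.part y = Q'.part v :=
            Q'.part_eq_of_mem (Q'.part_mem.mpr (mem_univ v)) hy
          have h2 : (f ⟨Q.part y, Q.part_mem.mpr (mem_univ y)⟩ : Fin K)
              = f ⟨Q.part v, Q.part_mem.mpr (mem_univ v)⟩ := by
            rw [hfg y, hfg v]
            exact congrArg f' (Subtype.ext h3)
          have h1 : Q.part y = Q.part v := congrArg Subtype.val (f.injective h2)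
          rw [← hpv, ← h1]; exact Q.mem_part (mem_univ y)
      rw [this]; exact Q'.part_mem.mpr (mem_univ v)
    have hPP' : P = P' := by
      apply Finpartition.ext
      apply Finset.Subset.antisymm
      · intro p hp; exact key P P' e e' hg p hp
      · intro p hp; exact key P' P e' e (fun v => (hg v).symm) p hp
    subst hPP'
    have he : e = e' := by
      apply Equiv.ext
      rintro ⟨p, hp⟩
      obtain ⟨v, hv⟩ := P.nonempty_of_mem_parts hp
      have hpv : P.part v = p := P.part_eq_of_mem hp hv
      have := hg v
      rw [show (⟨P.part v, P.part_mem.mpr (mem_univ v)⟩ : {x // x ∈ P.parts}) = ⟨p, hp⟩ from Subtype.ext hpv] at this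
      exact this
    simp [he]
  have hsurj : Function.Surjective Ψ := by
    rintro ⟨g, hg⟩
    let fib : Fin K → Finset (Fin N) := fun j => univ.filter (fun x => g x = j)
    have hmemfib : ∀ x j, x ∈ fib j ↔ g x = j := by
      intro x j; simp [fib]
    have hfibne : ∀ j, (fib j).Nonempty := by
      intro j
      obtain ⟨x, hx⟩ := hg j
      exact ⟨x, (hmemfib x j).mpr hx⟩
    have hfibinj : Function.Injective fib := by
      intro j j' h
      obtain ⟨x, hx⟩ := hfibne j
      have hx' : x ∈ fib j' := h ▸ hx
      rw [hmemfib] at hx hx'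
      rw [← hx, hx']
    let P : Finpartition (Finset.univ : Finset (Fin N)) :=
      { parts := univ.image fib
        supIndep := by
          rw [Finset.supIndep_iff_pairwiseDisjoint]
          intro p hp q hq hpq
          simp only [coe_image, Set.mem_image] at hp hq
          obtain ⟨j, _, rfl⟩ := hp
          obtain ⟨j', _, rfl⟩ := hq
          have : j ≠ j' := fun h => hpq (by rw [h])
          simp only [Function.onFun, id_eq]
          rw [Finset.disjoint_left]
          intro x h1 h2
          rw [hmemfib] at h1 h2
          exact this (h1 ▸ h2 ▸ rfl)
        sup_parts := by
          apply Finset.Subset.antisymm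
          · intro x _; exact mem_univ x
          · intro x _
            exact (Finset.le_sup (f := id) (mem_image_of_mem fib (mem_univ (g x))))
              ((hmemfib x (g x)).mpr rfl)
        bot_notMem := by
          simp only [Finset.bot_eq_empty, mem_image]
          rintro ⟨j, -, hj⟩
          exact (hfibne j).ne_empty hj }
    have hcard : P.parts.card = K := by
      show (univ.image fib).card = K
      rw [Finset.card_image_of_injOn (hfibinj.injOn)]
      simp
    have hpartmem : ∀ j, fib j ∈ P.parts := fun j => mem_image_of_mem fib (mem_univ j)
    let E : Fin K → {x // x ∈ P.parts} := fun j => ⟨fib j, hpartmem j⟩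
    have hEbij : Function.Bijective E := by
      constructor
      · intro j j' h
        exact hfibinj (congrArg Subtype.val h)
      · rintro ⟨p, hp⟩
        simp only [P, mem_image] at hp
        obtain ⟨j, -, rfl⟩ := hp
        exact ⟨j, rfl⟩
    refine ⟨⟨⟨P, hcard⟩, (Equiv.ofBijective E hEbij).symm⟩, ?_⟩
    apply Subtype.ext
    funext v
    show (Equiv.ofBijective E hEbij).symm ⟨P.part v, _⟩ = g v
    have hv : v ∈ fib (g v) := (hmemfib v (g v)).mpr rfl
    have : P.part v = fib (g v) := P.part_eq_of_mem (hpartmem (g v)) hv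
    rw [show (⟨P.part v, P.part_mem.mpr (mem_univ v)⟩ : {x // x ∈ P.parts}) = E (g v) from Subtype.ext this]
    exact (Equiv.ofBijective E hEbij).symm_apply_apply (g v)
  have hequiv := Equiv.ofBijective Ψ ⟨hinj, hsurj⟩
  rw [← Nat.card_congr hequiv, nat_card_sigma]
  have : ∀ P : PK, Nat.card ({x // x ∈ (P.1.parts)} ≃ Fin K) = K.factorial := by
    intro P
    have hc : Fintype.card {x // x ∈ (P.1.parts)} = K := by
      rw [Fintype.card_coe]; exact P.2
    rw [Nat.card_eq_fintype_card, Fintype.card_equiv (Fintype.equivFinOfCardEq hc)]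
    rw [hc]
  simp only [this, Finset.sum_const, smul_eq_mul]
  rw [Finset.card_univ, stirling2, Nat.card_eq_fintype_card, mul_comm]


def Hits {α : Type*} {k : ℕ} (σ : α → Fin (k+1)) : Prop :=
  ∀ j : Fin (k+1), j ≠ 0 → ∃ a, σ a = j

section A
variable {α : Type*} [Fintype α] [DecidableEq α] {k : ℕ}

lemma card_hits_succ (k : ℕ) :
    Nat.card {σ : α → Fin (k+1) // Hits σ} * (k+1) =
      Nat.card {g : Option α → Fin (k+1) // Function.Surjective g} := by
  classical
  let Sc : Fin (k+1) → Type _ := fun c =>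
    {g : Option α → Fin (k+1) // Function.Surjective g ∧ g none = c}
  have e1 : (Σ c, Sc c) ≃ {g : Option α → Fin (k+1) // Function.Surjective g} := by
    refine Equiv.ofBijective (fun x => ⟨x.2.1, x.2.2.1⟩) ⟨?_, ?_⟩
    · rintro ⟨c, g, hs, hc⟩ ⟨c', g', hs', hc'⟩ h
      have hgg : g = g' := congrArg Subtype.val h
      subst hgg
      have : c = c' := by rw [← hc, hc']
      subst this
      rfl
    · rintro ⟨g, hs⟩
      exact ⟨⟨g none, g, hs, rfl⟩, rfl⟩
  have e2 : ∀ c : Fin (k+1), Sc c ≃ Sc 0 := by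
    intro c
    refine ⟨fun x => ⟨(Equiv.swap c 0) ∘ x.1, (Equiv.swap c 0).surjective.comp x.2.1, by
        simp [x.2.2]⟩,
      fun x => ⟨(Equiv.swap c 0) ∘ x.1, (Equiv.swap c 0).surjective.comp x.2.1, by
        simp [x.2.2]⟩, ?_, ?_⟩
    · rintro ⟨g, hs, hc⟩
      apply Subtype.ext
      funext o
      simp [Equiv.swap_apply_self]
    · rintro ⟨g, hs, hc⟩
      apply Subtype.ext
      funext o
      simp [Equiv.swap_apply_self]
  have e3 : Sc 0 ≃ {σ : α → Fin (k+1) // Hits σ} := by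
    refine ⟨fun x => ⟨x.1 ∘ some, ?_⟩, fun σ => ⟨fun o => o.elim 0 σ.1, ?_, rfl⟩, ?_, ?_⟩
    · intro j hj
      obtain ⟨o, ho⟩ := x.2.1 j
      match o, ho with
      | none, ho => exact absurd (by rw [← ho]; exact x.2.2) hj
      | some a, ho => exact ⟨a, ho⟩
    · intro j
      by_cases hj : j = 0
      · exact ⟨none, hj.symm⟩
      · obtain ⟨a, ha⟩ := σ.2 j hj
        exact ⟨some a, ha⟩
    · rintro ⟨g, hs, h0⟩
      apply Subtype.ext
      funext o
      cases o with
      | none => exact h0.symm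
      | some a => rfl
    · rintro ⟨σ, hσ⟩
      rfl
  have hcards : Nat.card {g : Option α → Fin (k+1) // Function.Surjective g}
      = ∑ c : Fin (k+1), Nat.card (Sc c) := by
    rw [← Nat.card_congr e1]
    exact nat_card_sigma Sc
  rw [hcards]
  have : ∀ c : Fin (k+1), Nat.card (Sc c) = Nat.card {σ : α → Fin (k+1) // Hits σ} := by
    intro c
    rw [Nat.card_congr (e2 c), Nat.card_congr e3]
  simp only [this, Finset.sum_const, Finset.card_univ, Fintype.card_fin, smul_eq_mul]
  ring

lemma card_surj_domain {β : Type*} [Fintype β] (K : ℕ) :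
    Nat.card {g : β → Fin K // Function.Surjective g} =
      K.factorial * stirling2 (Fintype.card β) K := by
  classical
  rw [← card_surj (Fintype.card β) K]
  apply Nat.card_congr
  have e := Fintype.equivFin β
  exact ⟨fun g => ⟨g.1 ∘ e.symm, g.2.comp e.symm.surjective⟩,
    fun g => ⟨g.1 ∘ e, g.2.comp e.surjective⟩,
    fun g => by apply Subtype.ext; funext x; simp,
    fun g => by apply Subtype.ext; funext x; simp⟩

lemma card_hits (k : ℕ) :
    Nat.card {σ : α → Fin (k+1) // Hits σ} =
      k.factorial * stirling2 (Fintype.card α + 1) (k+1) := by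
  have h1 := card_hits_succ (α := α) k
  rw [card_surj_domain (k+1)] at h1
  have h2 : Fintype.card (Option α) = Fintype.card α + 1 := Fintype.card_option
  rw [h2, Nat.factorial_succ, mul_assoc] at h1
  exact Nat.eq_of_mul_eq_mul_right (Nat.succ_pos k) (by rw [h1, mul_comm])

end A

section B
variable {m k : ℕ} (a0 : Fin m)

def HitsAt (a0 : Fin m) (i : Fin (k+1)) : Type :=
  {σ : Fin m → Fin (k+1) // Hits σ ∧ σ a0 = i}

instance : ∀ i : Fin (k+1), Finite (HitsAt a0 i) := fun _ => by
  unfold HitsAt; infer_instance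

lemma card_hitsAt_zero (hm : 1 ≤ m) :
    Nat.card (HitsAt a0 (0 : Fin (k+1))) = k.factorial * stirling2 m (k+1) := by
  classical
  have e : HitsAt a0 (0 : Fin (k+1)) ≃ {σ : {x : Fin m // x ≠ a0} → Fin (k+1) // Hits σ} := by
    refine ⟨fun x => ⟨x.1 ∘ Subtype.val, ?_⟩,
      fun σ => ⟨fun y => if h : y = a0 then 0 else σ.1 ⟨y, h⟩, ?_, by simp⟩, ?_, ?_⟩
    · intro j hj
      obtain ⟨a, ha⟩ := x.2.1 j hj
      have hne : a ≠ a0 := by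
        intro h; subst h; rw [x.2.2] at ha; exact hj ha.symm
      exact ⟨⟨a, hne⟩, ha⟩
    · intro j hj
      obtain ⟨⟨y, hy⟩, ha⟩ := σ.2 j hj
      exact ⟨y, by simp [dif_neg hy, ha]⟩
    · rintro ⟨σ, hσ, h0⟩
      apply Subtype.ext
      funext y
      by_cases h : y = a0
      · subst h; simp [h0.symm]
      · simp [dif_neg h]
    · rintro ⟨σ, hσ⟩
      apply Subtype.ext
      funext ⟨y, hy⟩
      simp [dif_neg hy]
  rw [Nat.card_congr e, card_hits]
  congr 2
  rw [Fintype.card_subtype_compl]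
  simp [Nat.sub_add_cancel hm]

lemma card_hitsAt_ne (i i' : Fin (k+1)) (hi : i ≠ 0) (hi' : i' ≠ 0) :
    Nat.card (HitsAt a0 i) = Nat.card (HitsAt a0 i') := by
  apply Nat.card_congr
  have hswap : ∀ (j : Fin (k+1)), j ≠ 0 → Equiv.swap i i' j ≠ 0 := by
    intro j hj h
    rcases eq_or_ne j i with rfl | h1
    · rw [Equiv.swap_apply_left] at h; exact hi' h
    rcases eq_or_ne j i' with rfl | h2
    · rw [Equiv.swap_apply_right] at h; exact hi h
    · rw [Equiv.swap_apply_of_ne_of_ne h1 h2] at h; exact hj h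
  have hH : ∀ (σ : Fin m → Fin (k+1)), Hits σ → Hits ((Equiv.swap i i') ∘ σ) := by
    intro σ hσ j hj
    obtain ⟨a, ha⟩ := hσ (Equiv.swap i i' j) (hswap j hj)
    exact ⟨a, by simp [Function.comp, ha, Equiv.swap_apply_self]⟩
  exact ⟨fun x => ⟨(Equiv.swap i i') ∘ x.1, hH x.1 x.2.1, by simp [x.2.2]⟩,
    fun x => ⟨(Equiv.swap i i') ∘ x.1, hH x.1 x.2.1, by simp [x.2.2]⟩,
    fun x => by apply Subtype.ext; funext y; simp [Equiv.swap_apply_self],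
    fun x => by apply Subtype.ext; funext y; simp [Equiv.swap_apply_self]⟩

lemma sum_card_hitsAt :
    ∑ i : Fin (k+1), Nat.card (HitsAt a0 i) =
      k.factorial * stirling2 (m + 1) (k+1) := by
  classical
  have e : (Σ i : Fin (k+1), HitsAt a0 i) ≃ {σ : Fin m → Fin (k+1) // Hits σ} := by
    refine Equiv.ofBijective (fun x => ⟨x.2.1, x.2.2.1⟩) ⟨?_, ?_⟩
    · rintro ⟨i, σ, hσ, hi⟩ ⟨i', σ', hσ', hi'⟩ h
      have hσσ : σ = σ' := congrArg Subtype.val h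
      subst hσσ
      have : i = i' := by rw [← hi, hi']
      subst this
      rfl
    · rintro ⟨σ, hσ⟩
      exact ⟨⟨σ a0, σ, hσ, rfl⟩, rfl⟩
  rw [← nat_card_sigma (HitsAt a0), Nat.card_congr e, card_hits]
  simp

end B

/-! ### Boolean matrices whose rows form a chain -/

section Matrices

variable {m n : ℕ}

def mrow (M : Fin m → Fin n → Bool) (a : Fin m) : Finset (Fin n) :=
  univ.filter (fun b => M a b = true)

def RowChain (M : Fin m → Fin n → Bool) : Prop :=
  ∀ a a', mrow M a ⊆ mrow M a' ∨ mrow M a' ⊆ mrow M a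

/-- The distinct nonempty row supports. -/
def supps (M : Fin m → Fin n → Bool) : Finset (Finset (Fin n)) :=
  (univ.image (mrow M)).erase ∅

def kOf (M : Fin m → Fin n → Bool) : ℕ := (supps M).card

def sigOf (M : Fin m → Fin n → Bool) (a : Fin m) : ℕ :=
  ((supps M).filter (· ⊆ mrow M a)).card

def tauOf (M : Fin m → Fin n → Bool) (b : Fin n) : ℕ :=
  ((supps M).filter (fun s => b ∈ s)).card

lemma sigOf_le (M : Fin m → Fin n → Bool) (a : Fin m) : sigOf M a ≤ kOf M :=
  Finset.card_le_card (filter_subset _ _)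

lemma tauOf_le (M : Fin m → Fin n → Bool) (b : Fin n) : tauOf M b ≤ kOf M :=
  Finset.card_le_card (filter_subset _ _)

lemma supps_chain {M : Fin m → Fin n → Bool} (hC : RowChain M) :
    ∀ s ∈ supps M, ∀ t ∈ supps M, s ⊆ t ∨ t ⊆ s := by
  intro s hs t ht
  obtain ⟨a, -, rfl⟩ := mem_image.mp (mem_of_mem_erase hs)
  obtain ⟨a', -, rfl⟩ := mem_image.mp (mem_of_mem_erase ht)
  exact hC a a'

lemma mem_iff_kOf {M : Fin m → Fin n → Bool} (hC : RowChain M) (a : Fin m) (b : Fin n) :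
    M a b = true ↔ kOf M + 1 ≤ sigOf M a + tauOf M b := by
  classical
  set A := (supps M).filter (· ⊆ mrow M a) with hA
  set B := (supps M).filter (fun s => b ∈ s) with hB
  have hkey : (A ∪ B).card + (A ∩ B).card = sigOf M a + tauOf M b :=
    Finset.card_union_add_card_inter A B
  have hAB : A ∪ B ⊆ supps M := union_subset (filter_subset _ _) (filter_subset _ _)
  constructor
  · intro hM
    have hbrow : b ∈ mrow M a := by simp [mrow, hM]
    have hrowne : mrow M a ≠ ∅ := fun h => by simp [h] at hbrow
    have hrowmem : mrow M a ∈ supps M :=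
      mem_erase.mpr ⟨hrowne, mem_image_of_mem _ (mem_univ a)⟩
    have hcover : supps M ⊆ A ∪ B := by
      intro s hs
      rcases supps_chain hC s hs (mrow M a) hrowmem with h | h
      · exact mem_union_left _ (mem_filter.mpr ⟨hs, h⟩)
      · exact mem_union_right _ (mem_filter.mpr ⟨hs, h hbrow⟩)
    have h1 : (A ∪ B).card = kOf M :=
      congrArg Finset.card (Finset.Subset.antisymm hAB hcover)
    have h2 : 1 ≤ (A ∩ B).card := by
      rw [Nat.one_le_iff_ne_zero, ← Nat.pos_iff_ne_zero, Finset.card_pos]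
      exact ⟨mrow M a, mem_inter.mpr ⟨mem_filter.mpr ⟨hrowmem, subset_rfl⟩,
        mem_filter.mpr ⟨hrowmem, hbrow⟩⟩⟩
    omega
  · intro hle
    by_contra hM
    have hbrow : b ∉ mrow M a := by
      rw [mrow, mem_filter]
      rintro ⟨-, h⟩
      exact hM h
    have hdisj : A ∩ B = ∅ := by
      rw [Finset.eq_empty_iff_forall_notMem]
      intro s hs
      rw [mem_inter, mem_filter, mem_filter] at hs
      exact hbrow (hs.1.2 hs.2.2)
    have h1 : (A ∪ B).card ≤ kOf M := Finset.card_le_card hAB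
    rw [hdisj] at hkey
    simp at hkey
    omega

lemma kOf_le_min {M : Fin m → Fin n → Bool} (hC : RowChain M) :
    kOf M ≤ min m n := by
  classical
  apply le_min
  · calc kOf M ≤ (univ.image (mrow M)).card := Finset.card_erase_le
    _ ≤ (univ : Finset (Fin m)).card := Finset.card_image_le
    _ = m := by simp
  · have h1 : kOf M ≤ (Finset.Icc 1 n).card := by
      apply Finset.card_le_card_of_injOn Finset.card
      · intro s hs
        rw [Finset.mem_coe, mem_Icc]
        have hne := (mem_erase.mp (Finset.mem_coe.mp hs)).1
        constructor
        · rw [Nat.one_le_iff_ne_zero]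
          simpa [Finset.card_eq_zero] using hne
        · exact le_trans (Finset.card_le_univ s) (by simp)
      · intro s hs t ht hst
        rcases supps_chain hC s hs t ht with h | h
        · exact Finset.eq_of_subset_of_card_le h (le_of_eq hst.symm)
        · exact (Finset.eq_of_subset_of_card_le h (le_of_eq hst)).symm
    simpa using h1

lemma hits_sigOf {M : Fin m → Fin n → Bool} (hC : RowChain M) :
    ∀ j, 1 ≤ j → j ≤ kOf M → ∃ a, sigOf M a = j := by
  classical
  intro j hj1 hjk
  set φ : Finset (Fin n) → ℕ := fun s => ((supps M).filter (· ⊆ s)).card with hφ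
  have hmaps : ∀ s ∈ supps M, φ s ∈ Finset.Icc 1 (kOf M) := by
    intro s hs
    rw [mem_Icc]
    constructor
    · rw [Nat.one_le_iff_ne_zero, ← Nat.pos_iff_ne_zero, Finset.card_pos]
      exact ⟨s, mem_filter.mpr ⟨hs, subset_rfl⟩⟩
    · exact Finset.card_le_card (filter_subset _ _)
  have hinj : Set.InjOn φ (supps M) := by
    intro s hs t ht hst
    have key : ∀ u v : Finset (Fin n), u ∈ supps M → v ∈ supps M → u ⊆ v → φ u = φ v → u = v := by
      intro u v hu hv huv hφuv
      have hsub : (supps M).filter (· ⊆ u) ⊆ (supps M).filter (· ⊆ v) := by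
        intro x hx
        rw [mem_filter] at hx ⊢
        exact ⟨hx.1, hx.2.trans huv⟩
      have heq := Finset.eq_of_subset_of_card_le hsub (le_of_eq hφuv.symm)
      have hv' : v ∈ (supps M).filter (· ⊆ u) := by
        rw [heq, mem_filter]; exact ⟨hv, subset_rfl⟩
      exact Finset.Subset.antisymm huv (mem_filter.mp hv').2
    rcases supps_chain hC s hs t ht with h | h
    · exact key s t hs ht h hst
    · exact (key t s ht hs h hst.symm).symm
  have hcard : ((supps M).image φ).card = (Finset.Icc 1 (kOf M)).card := by
    rw [Finset.card_image_of_injOn hinj, Nat.card_Icc]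
    simp [kOf]
  have himg : (supps M).image φ = Finset.Icc 1 (kOf M) := by
    apply Finset.eq_of_subset_of_card_le
    · intro x hx
      obtain ⟨s, hs, rfl⟩ := mem_image.mp hx
      exact hmaps s hs
    · exact le_of_eq hcard.symm
  have hjmem : j ∈ (supps M).image φ := himg ▸ (mem_Icc.mpr ⟨hj1, hjk⟩)
  obtain ⟨s, hs, hφs⟩ := mem_image.mp hjmem
  obtain ⟨a, -, rfl⟩ := mem_image.mp (mem_of_mem_erase hs)
  exact ⟨a, hφs⟩

lemma hits_tauOf {M : Fin m → Fin n → Bool} (hC : RowChain M) :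
    ∀ j, 1 ≤ j → j ≤ kOf M → ∃ b, tauOf M b = j := by
  classical
  intro j hj1 hjk
  -- find the support with exactly kOf M + 1 - j subsets below it
  obtain ⟨a, ha⟩ := hits_sigOf hC (kOf M + 1 - j) (by omega) (by omega)
  set s := mrow M a with hs
  have hsmem : s ∈ supps M := by
    refine mem_erase.mpr ⟨?_, mem_image_of_mem _ (mem_univ a)⟩
    intro h
    rw [sigOf, ← hs, h] at ha
    have : ∀ t, t ∈ (supps M).filter (· ⊆ (∅ : Finset (Fin n))) → False := by
      intro t ht
      rw [mem_filter] at ht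
      exact (mem_erase.mp ht.1).1 (Finset.subset_empty.mp ht.2)
    have hempty : (supps M).filter (· ⊆ (∅ : Finset (Fin n))) = ∅ :=
      Finset.eq_empty_iff_forall_notMem.mpr (fun t ht => this t ht)
    rw [hempty] at ha
    simp at ha
    omega
  -- choose b in s avoiding all proper sub-supports
  have hbex : ∃ b ∈ s, ∀ t ∈ supps M, t ⊂ s → b ∉ t := by
    by_cases hP : ((supps M).filter (· ⊂ s)).Nonempty
    · obtain ⟨tstar, htsmem, htsmax⟩ := Finset.exists_max_image _ Finset.card hP
      have htsub : tstar ⊂ s := (mem_filter.mp htsmem).2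
      have hsub : ∀ t ∈ (supps M).filter (· ⊂ s), t ⊆ tstar := by
        intro t ht
        rcases supps_chain hC t (mem_filter.mp ht).1 tstar (mem_filter.mp htsmem).1 with h | h
        · exact h
        · rw [Finset.eq_of_subset_of_card_le h (htsmax t ht)]
      obtain ⟨b, hbs, hbt⟩ := Finset.exists_of_ssubset htsub
      exact ⟨b, hbs, fun t ht hts hbt' => hbt (hsub t (mem_filter.mpr ⟨ht, hts⟩) hbt')⟩
    · obtain ⟨b, hb⟩ := Finset.nonempty_iff_ne_empty.mpr (mem_erase.mp hsmem).1
      exact ⟨b, hb, fun t ht hts _ => hP ⟨t, mem_filter.mpr ⟨ht, hts⟩⟩⟩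
  obtain ⟨b, hbs, hbavoid⟩ := hbex
  refine ⟨b, ?_⟩
  have hmemiff : ∀ t ∈ supps M, (b ∈ t ↔ s ⊆ t) := by
    intro t ht
    constructor
    · intro hbt
      rcases supps_chain hC t ht s hsmem with h | h
      · rcases eq_or_ne t s with rfl | hne
        · exact subset_rfl
        · exact absurd hbt (hbavoid t ht (Finset.ssubset_iff_subset_ne.mpr ⟨h, hne⟩))
      · exact h
    · intro h; exact h hbs
  have hBeq : (supps M).filter (fun t => b ∈ t) = (supps M).filter (fun t => s ⊆ t) := by
    apply Finset.filter_congr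
    intro t ht
    simpa using hmemiff t ht
  have hunion : (supps M).filter (· ⊆ s) ∪ (supps M).filter (fun t => s ⊆ t) = supps M := by
    apply Finset.Subset.antisymm (union_subset (filter_subset _ _) (filter_subset _ _))
    intro t ht
    rcases supps_chain hC t ht s hsmem with h | h
    · exact mem_union_left _ (mem_filter.mpr ⟨ht, h⟩)
    · exact mem_union_right _ (mem_filter.mpr ⟨ht, h⟩)
  have hinter : (supps M).filter (· ⊆ s) ∩ (supps M).filter (fun t => s ⊆ t) = {s} := by
    apply Finset.Subset.antisymm
    · intro t ht
      rw [mem_inter, mem_filter, mem_filter] at ht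
      rw [mem_singleton]
      exact Finset.Subset.antisymm ht.1.2 ht.2.2
    · intro t ht
      rw [mem_singleton] at ht
      subst ht
      exact mem_inter.mpr ⟨mem_filter.mpr ⟨hsmem, subset_rfl⟩, mem_filter.mpr ⟨hsmem, subset_rfl⟩⟩
  have hcards := Finset.card_union_add_card_inter
    ((supps M).filter (· ⊆ s)) ((supps M).filter (fun t => s ⊆ t))
  rw [hunion, hinter] at hcards
  simp only [Finset.card_singleton] at hcards
  have hσ : ((supps M).filter (· ⊆ s)).card = kOf M + 1 - j := ha
  rw [tauOf, hBeq]
  rw [show kOf M = (supps M).card from rfl] at hσ hjk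
  omega

/-- Build the staircase matrix from data `(k, σ, τ)`. -/
def mkM (k : ℕ) (σ : Fin m → Fin (k+1)) (τ : Fin n → Fin (k+1)) :
    Fin m → Fin n → Bool :=
  fun a b => decide (k + 1 ≤ (σ a : ℕ) + (τ b : ℕ))

/-- Staircase level sets. -/
def Sf (k : ℕ) (τ : Fin n → Fin (k+1)) (i : ℕ) : Finset (Fin n) :=
  univ.filter (fun b => k + 1 ≤ i + (τ b : ℕ))

lemma mem_Sf {k : ℕ} {τ : Fin n → Fin (k+1)} {i : ℕ} {b : Fin n} :
    b ∈ Sf k τ i ↔ k + 1 ≤ i + (τ b : ℕ) := by simp [Sf]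

lemma Sf_mono {k : ℕ} {τ : Fin n → Fin (k+1)} {i i' : ℕ} (h : i ≤ i') :
    Sf k τ i ⊆ Sf k τ i' := by
  intro b hb
  rw [mem_Sf] at hb ⊢
  omega

lemma mrow_mkM {k : ℕ} (σ : Fin m → Fin (k+1)) (τ : Fin n → Fin (k+1)) (a : Fin m) :
    mrow (mkM k σ τ) a = Sf k τ (σ a) := by
  ext b
  simp [mrow, mkM, Sf]

lemma wit_of_hits {s k : ℕ} {σ : Fin s → Fin (k+1)} (hσ : Hits σ) :
    ∀ i : ℕ, 1 ≤ i → i ≤ k → ∃ a, (σ a : ℕ) = i := by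
  intro i hi1 hik
  obtain ⟨a, ha⟩ := hσ ⟨i, by omega⟩ (by
    intro h
    rw [Fin.ext_iff] at h
    simp at h
    omega)
  exact ⟨a, by rw [ha]⟩

lemma Sf_nonempty {k : ℕ} {τ : Fin n → Fin (k+1)} (hτ : Hits τ) {i : ℕ}
    (hi1 : 1 ≤ i) (hik : i ≤ k) : (Sf k τ i).Nonempty := by
  obtain ⟨b, hb⟩ := wit_of_hits hτ (k + 1 - i) (by omega) (by omega)
  exact ⟨b, mem_Sf.mpr (by omega)⟩

lemma Sf_zero {k : ℕ} {τ : Fin n → Fin (k+1)} : Sf k τ 0 = ∅ := by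
  rw [Finset.eq_empty_iff_forall_notMem]
  intro b hb
  rw [mem_Sf] at hb
  have := (τ b).isLt
  omega

lemma Sf_not_subset {k : ℕ} {τ : Fin n → Fin (k+1)} (hτ : Hits τ) {i i' : ℕ}
    (hii' : i < i') (hi1 : 1 ≤ i') (hik : i' ≤ k) : ¬ (Sf k τ i' ⊆ Sf k τ i) := by
  obtain ⟨b, hb⟩ := wit_of_hits hτ (k + 1 - i') (by omega) (by omega)
  intro hsub
  have h1 : b ∈ Sf k τ i' := mem_Sf.mpr (by omega)
  have h2 := mem_Sf.mp (hsub h1)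
  omega

lemma rowChain_mkM (k : ℕ) (σ : Fin m → Fin (k+1)) (τ : Fin n → Fin (k+1)) :
    RowChain (mkM k σ τ) := by
  intro a a'
  rw [mrow_mkM, mrow_mkM]
  rcases le_total ((σ a : ℕ)) ((σ a' : ℕ)) with h | h
  · exact Or.inl (Sf_mono h)
  · exact Or.inr (Sf_mono h)

lemma supps_mkM {k : ℕ} (σ : Fin m → Fin (k+1)) (τ : Fin n → Fin (k+1))
    (hσ : Hits σ) (hτ : Hits τ) :
    supps (mkM k σ τ) = (Finset.Icc 1 k).image (Sf k τ) := by
  classical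
  apply Finset.Subset.antisymm
  · intro s hs
    obtain ⟨hne, hs'⟩ := mem_erase.mp hs
    obtain ⟨a, -, rfl⟩ := mem_image.mp hs'
    rw [mrow_mkM]
    rw [mrow_mkM] at hne
    have h1 : 1 ≤ (σ a : ℕ) := by
      rcases Nat.eq_zero_or_pos ((σ a : ℕ)) with h0 | h
      · exact absurd (by rw [h0]; exact Sf_zero) hne
      · exact h
    exact mem_image_of_mem _ (mem_Icc.mpr ⟨h1, by have := (σ a).isLt; omega⟩)
  · intro s hs
    obtain ⟨i, hi, rfl⟩ := mem_image.mp hs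
    rw [mem_Icc] at hi
    obtain ⟨a, ha⟩ := wit_of_hits hσ i hi.1 hi.2
    refine mem_erase.mpr ⟨(Sf_nonempty hτ hi.1 hi.2).ne_empty, ?_⟩
    rw [← ha, ← mrow_mkM σ]
    exact mem_image_of_mem _ (mem_univ a)

lemma Sf_injOn {k : ℕ} {τ : Fin n → Fin (k+1)} (hτ : Hits τ) :
    Set.InjOn (Sf k τ) (Finset.Icc 1 k) := by
  intro i hi i' hi' h
  simp only [Finset.coe_Icc, Set.mem_Icc] at hi hi'
  by_contra hne
  rcases Nat.lt_or_ge i i' with hlt | hge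
  · exact Sf_not_subset hτ hlt hi'.1 hi'.2 (h ▸ subset_rfl)
  · have hlt : i' < i := by omega
    exact Sf_not_subset hτ hlt hi.1 hi.2 (h ▸ subset_rfl)

lemma kOf_mkM (k : ℕ) (σ : Fin m → Fin (k+1)) (τ : Fin n → Fin (k+1))
    (hσ : Hits σ) (hτ : Hits τ) : kOf (mkM k σ τ) = k := by
  rw [kOf, supps_mkM σ τ hσ hτ, Finset.card_image_of_injOn (Sf_injOn hτ), Nat.card_Icc]
  omega

lemma filter_image_Icc {k : ℕ} {τ : Fin n → Fin (k+1)} (hτ : Hits τ)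
    (p : Finset (Fin n) → Prop) [DecidablePred p] :
    (((Finset.Icc 1 k).image (Sf k τ)).filter p).card
      = ((Finset.Icc 1 k).filter (fun i => p (Sf k τ i))).card := by
  classical
  rw [Finset.filter_image]
  exact Finset.card_image_of_injOn ((Sf_injOn hτ).mono (by
    intro x hx
    exact (Finset.filter_subset _ _) hx))

lemma sigOf_mkM (k : ℕ) (σ : Fin m → Fin (k+1)) (τ : Fin n → Fin (k+1))
    (hσ : Hits σ) (hτ : Hits τ) (a : Fin m) : sigOf (mkM k σ τ) a = σ a := by
  classical
  rw [sigOf, supps_mkM σ τ hσ hτ, mrow_mkM, filter_image_Icc hτ]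
  have hfilter : (Finset.Icc 1 k).filter (fun i => Sf k τ i ⊆ Sf k τ (σ a))
      = Finset.Icc 1 ((σ a : ℕ)) := by
    ext i
    rw [mem_filter, mem_Icc, mem_Icc]
    constructor
    · rintro ⟨⟨h1, hk⟩, hsub⟩
      refine ⟨h1, ?_⟩
      by_contra h
      push_neg at h
      exact Sf_not_subset hτ h h1 hk hsub
    · rintro ⟨h1, hle⟩
      have hk : i ≤ k := le_trans hle (by have := (σ a).isLt; omega)
      exact ⟨⟨h1, hk⟩, Sf_mono hle⟩
  rw [hfilter, Nat.card_Icc]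
  omega

lemma tauOf_mkM (k : ℕ) (σ : Fin m → Fin (k+1)) (τ : Fin n → Fin (k+1))
    (hσ : Hits σ) (hτ : Hits τ) (b : Fin n) : tauOf (mkM k σ τ) b = τ b := by
  classical
  rw [tauOf, supps_mkM σ τ hσ hτ, filter_image_Icc hτ]
  have hfilter : (Finset.Icc 1 k).filter (fun i => b ∈ Sf k τ i)
      = Finset.Icc (k + 1 - (τ b : ℕ)) k := by
    ext i
    rw [mem_filter, mem_Icc, mem_Icc, mem_Sf]
    have := (τ b).isLt
    omega
  rw [hfilter, Nat.card_Icc]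
  have := (τ b).isLt
  omega

def flipM (M : Fin m → Fin n → Bool) (a0 : Fin m) (b0 : Fin n) :
    Fin m → Fin n → Bool :=
  fun a b => if a = a0 ∧ b = b0 then !M a b else M a b

lemma mrow_flip_ne (M : Fin m → Fin n → Bool) {a0 a : Fin m} (b0 : Fin n) (h : a ≠ a0) :
    mrow (flipM M a0 b0) a = mrow M a := by
  ext b
  simp [mrow, flipM, h]

lemma mrow_flip_insert (M : Fin m → Fin n → Bool) {a0 : Fin m} {b0 : Fin n}
    (h : M a0 b0 = false) : mrow (flipM M a0 b0) a0 = insert b0 (mrow M a0) := by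
  ext b
  rcases eq_or_ne b b0 with rfl | hb
  · simp [mrow, flipM, h]
  · simp [mrow, flipM, hb]

lemma mrow_flip_erase (M : Fin m → Fin n → Bool) {a0 : Fin m} {b0 : Fin n}
    (h : M a0 b0 = true) : mrow (flipM M a0 b0) a0 = (mrow M a0).erase b0 := by
  ext b
  rcases eq_or_ne b b0 with rfl | hb
  · simp [mrow, flipM, h]
  · simp [mrow, flipM, hb, and_comm]

lemma rowChain_flip_iff (k : ℕ) (σ : Fin m → Fin (k+1)) (τ : Fin n → Fin (k+1))
    (hσ : Hits σ) (hτ : Hits τ) (a0 : Fin m) (b0 : Fin n) :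
    RowChain (flipM (mkM k σ τ) a0 b0) ↔
      ((σ a0 : ℕ) + (τ b0 : ℕ) = k ∨ (σ a0 : ℕ) + (τ b0 : ℕ) = k + 1) := by
  classical
  set M := mkM k σ τ with hM
  set F := flipM M a0 b0 with hF
  set i0 := (σ a0 : ℕ) with hi0
  set j0 := (τ b0 : ℕ) with hj0
  have hi0k : i0 ≤ k := by have := (σ a0).isLt; omega
  have hj0k : j0 ≤ k := by have := (τ b0).isLt; omega
  constructor
  · -- contrapositive: if the sum is out of range, exhibit incomparable rows
    intro hRC
    by_contra hcond
    push_neg at hcond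
    rcases Nat.lt_or_ge (i0 + j0) k with hlt | hge
    · -- i0 + j0 ≤ k - 1 : flipping a 0-entry breaks the chain
      have hM0 : M a0 b0 = false := by
        rw [hM]
        simp only [mkM, decide_eq_false_iff_not]
        omega
      obtain ⟨a1, ha1⟩ := wit_of_hits hσ (i0 + 1) (by omega) (by omega)
      obtain ⟨b1, hb1⟩ := wit_of_hits hτ (k - i0) (by omega) (by omega)
      have ha1ne : a1 ≠ a0 := by
        intro h; rw [h] at ha1; omega
      have hb1ne : b1 ≠ b0 := by
        intro h; rw [h] at hb1; omega
      have hrow0 : mrow F a0 = insert b0 (Sf k τ i0) := by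
        rw [hF, mrow_flip_insert M hM0, hM, mrow_mkM]
      have hrow1 : mrow F a1 = Sf k τ (i0 + 1) := by
        rw [hF, mrow_flip_ne M b0 ha1ne, hM, mrow_mkM, ha1]
      rcases hRC a1 a0 with h | h
      · have hb1mem : b1 ∈ mrow F a1 := by
          rw [hrow1, mem_Sf]; omega
        have := h hb1mem
        rw [hrow0, mem_insert] at this
        rcases this with h' | h'
        · exact hb1ne h'
        · rw [mem_Sf] at h'; omega
      · have hb0mem : b0 ∈ mrow F a0 := by
          rw [hrow0]; exact mem_insert_self _ _
        have := h hb0mem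
        rw [hrow1, mem_Sf] at this
        omega
    · -- k + 2 ≤ i0 + j0 : flipping a 1-entry breaks the chain
      have hge2 : k + 2 ≤ i0 + j0 := by omega
      have hM1 : M a0 b0 = true := by
        rw [hM]
        simp only [mkM, decide_eq_true_eq]
        omega
      obtain ⟨a1, ha1⟩ := wit_of_hits hσ (i0 - 1) (by omega) (by omega)
      obtain ⟨b1, hb1⟩ := wit_of_hits hτ (k + 1 - i0) (by omega) (by omega)
      have ha1ne : a1 ≠ a0 := by
        intro h; rw [h] at ha1; omega
      have hb1ne : b1 ≠ b0 := by
        intro h; rw [h] at hb1; omega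
      have hrow0 : mrow F a0 = (Sf k τ i0).erase b0 := by
        rw [hF, mrow_flip_erase M hM1, hM, mrow_mkM]
      have hrow1 : mrow F a1 = Sf k τ (i0 - 1) := by
        rw [hF, mrow_flip_ne M b0 ha1ne, hM, mrow_mkM, ha1]
      rcases hRC a1 a0 with h | h
      · have hb0mem : b0 ∈ mrow F a1 := by
          rw [hrow1, mem_Sf]; omega
        have := h hb0mem
        rw [hrow0] at this
        exact (Finset.notMem_erase b0 _) this
      · have hb1mem : b1 ∈ mrow F a0 := by
          rw [hrow0, mem_erase, mem_Sf]
          exact ⟨hb1ne, by omega⟩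
        have := h hb1mem
        rw [hrow1, mem_Sf] at this
        omega
  · -- if the sum is k or k+1, the flipped matrix still has chained rows
    intro hcond
    have hchain_ne : ∀ a a', a ≠ a0 → a' ≠ a0 → mrow F a ⊆ mrow F a' ∨ mrow F a' ⊆ mrow F a := by
      intro a a' ha ha'
      rw [hF, mrow_flip_ne M b0 ha, mrow_flip_ne M b0 ha']
      exact rowChain_mkM k σ τ a a'
    have hkey : ∀ a, a ≠ a0 → mrow F a ⊆ mrow F a0 ∨ mrow F a0 ⊆ mrow F a := by
      intro a ha
      have hrowa : mrow F a = Sf k τ ((σ a : ℕ)) := by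
        rw [hF, mrow_flip_ne M b0 ha, hM, mrow_mkM]
      rcases hcond with heq | heq
      · -- sum = k : 0-entry, row a0 becomes insert b0 (Sf i0)
        have hM0 : M a0 b0 = false := by
          rw [hM]; simp only [mkM, decide_eq_false_iff_not]; omega
        have hrow0 : mrow F a0 = insert b0 (Sf k τ i0) := by
          rw [hF, mrow_flip_insert M hM0, hM, mrow_mkM]
        rcases le_or_gt ((σ a : ℕ)) i0 with hle | hlt
        · left
          rw [hrowa, hrow0]
          exact (Sf_mono hle).trans (Finset.subset_insert _ _)
        · right
          rw [hrowa, hrow0]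
          apply Finset.insert_subset
          · rw [mem_Sf]; omega
          · exact Sf_mono (by omega)
      · -- sum = k+1 : 1-entry, row a0 becomes (Sf i0).erase b0
        have hM1 : M a0 b0 = true := by
          rw [hM]; simp only [mkM, decide_eq_true_eq]; omega
        have hrow0 : mrow F a0 = (Sf k τ i0).erase b0 := by
          rw [hF, mrow_flip_erase M hM1, hM, mrow_mkM]
        rcases le_or_gt i0 ((σ a : ℕ)) with hle | hlt
        · right
          rw [hrowa, hrow0]
          exact (Finset.erase_subset _ _).trans (Sf_mono hle)
        · left
          rw [hrowa, hrow0]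
          intro b hb
          rw [mem_Sf] at hb
          rw [mem_erase, mem_Sf]
          constructor
          · intro h
            rw [h] at hb
            omega
          · omega
    intro a a'
    by_cases ha : a = a0
    · by_cases ha' : a' = a0
      · rw [ha, ha']; exact Or.inl subset_rfl
      · rw [ha]
        rcases hkey a' ha' with h | h
        · exact Or.inr h
        · exact Or.inl h
    · by_cases ha' : a' = a0
      · rw [ha']; exact hkey a ha
      · exact hchain_ne a a' ha ha'

end Matrices

/-! ### Orientations and matrices -/

section Orient

variable {m n : ℕ}

def matOf (f : (Fin m ⊕ Fin n) → (Fin m ⊕ Fin n) → Bool) : Fin m → Fin n → Bool :=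
  fun a b => f (Sum.inl a) (Sum.inr b)

def orientOf (M : Fin m → Fin n → Bool) : (Fin m ⊕ Fin n) → (Fin m ⊕ Fin n) → Bool
  | Sum.inl a, Sum.inr b => M a b
  | Sum.inr b, Sum.inl a => !M a b
  | Sum.inl _, Sum.inl _ => false
  | Sum.inr _, Sum.inr _ => false

lemma isOrientation_orientOf (M : Fin m → Fin n → Bool) :
    IsOrientation (completeBipartiteGraph (Fin m) (Fin n)) (orientOf M) := by
  constructor
  · rintro (a | b) (a' | b') hadj
    · simp [completeBipartiteGraph] at hadj
    · show M a b' = !(!M a b'); simp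
    · rfl
    · simp [completeBipartiteGraph] at hadj
  · rintro (a | b) (a' | b') hadj
    · rfl
    · exact absurd (by simp [completeBipartiteGraph]) hadj
    · exact absurd (by simp [completeBipartiteGraph]) hadj
    · rfl

lemma orientOf_matOf {f : (Fin m ⊕ Fin n) → (Fin m ⊕ Fin n) → Bool}
    (hf : IsOrientation (completeBipartiteGraph (Fin m) (Fin n)) f) :
    orientOf (matOf f) = f := by
  funext u v
  match u, v with
  | Sum.inl a, Sum.inr b => rfl
  | Sum.inr b, Sum.inl a =>
    exact (hf.1 (Sum.inr b) (Sum.inl a) (by simp [completeBipartiteGraph])).symm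
  | Sum.inl a, Sum.inl a' =>
    exact (hf.2 _ _ (by simp [completeBipartiteGraph])).symm
  | Sum.inr b, Sum.inr b' =>
    exact (hf.2 _ _ (by simp [completeBipartiteGraph])).symm

lemma matOf_flipEdge (f : (Fin m ⊕ Fin n) → (Fin m ⊕ Fin n) → Bool) (a0 : Fin m) (b0 : Fin n) :
    matOf (flipEdge f (Sum.inl a0) (Sum.inr b0)) = flipM (matOf f) a0 b0 := by
  funext a b
  simp only [matOf, flipEdge, flipM]
  congr 1
  simp

lemma isOrientation_flipEdge {f : (Fin m ⊕ Fin n) → (Fin m ⊕ Fin n) → Bool}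
    (hf : IsOrientation (completeBipartiteGraph (Fin m) (Fin n)) f) (a0 : Fin m) (b0 : Fin n) :
    IsOrientation (completeBipartiteGraph (Fin m) (Fin n))
      (flipEdge f (Sum.inl a0) (Sum.inr b0)) := by
  classical
  constructor
  · intro u v hadj
    by_cases hc : (u = Sum.inl a0 ∧ v = Sum.inr b0) ∨ (u = Sum.inr b0 ∧ v = Sum.inl a0)
    · have hc' : (v = Sum.inl a0 ∧ u = Sum.inr b0) ∨ (v = Sum.inr b0 ∧ u = Sum.inl a0) := by
        tauto
      rw [flipEdge, if_pos hc, flipEdge, if_pos hc', hf.1 u v hadj]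
    · have hc' : ¬ ((v = Sum.inl a0 ∧ u = Sum.inr b0) ∨ (v = Sum.inr b0 ∧ u = Sum.inl a0)) := by
        tauto
      rw [flipEdge, if_neg hc, flipEdge, if_neg hc', hf.1 u v hadj]
  · intro u v hadj
    have hc : ¬ ((u = Sum.inl a0 ∧ v = Sum.inr b0) ∨ (u = Sum.inr b0 ∧ v = Sum.inl a0)) := by
      rintro (⟨rfl, rfl⟩ | ⟨rfl, rfl⟩)
      · exact hadj (by simp [completeBipartiteGraph])
      · exact hadj (by simp [completeBipartiteGraph])
    rw [flipEdge, if_neg hc]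
    exact hf.2 u v hadj

lemma acyclic_iff {f : (Fin m ⊕ Fin n) → (Fin m ⊕ Fin n) → Bool}
    (hf : IsOrientation (completeBipartiteGraph (Fin m) (Fin n)) f) :
    OrientAcyclic f ↔ RowChain (matOf f) := by
  classical
  set M := matOf f with hMdef
  constructor
  · intro hac
    by_contra hRC
    unfold RowChain at hRC
    push_neg at hRC
    obtain ⟨a, a', h1, h2⟩ := hRC
    rw [Finset.not_subset] at h1 h2
    obtain ⟨b, hb1, hb2⟩ := h1
    obtain ⟨b', hb1', hb2'⟩ := h2
    simp only [mrow, mem_filter, mem_univ, true_and, not_and] at hb1 hb2 hb1' hb2'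
    have e1 : f (Sum.inl a) (Sum.inr b) = true := hb1
    have e2 : f (Sum.inr b) (Sum.inl a') = true := by
      rw [hf.1 (Sum.inr b) (Sum.inl a') (by simp [completeBipartiteGraph])]
      show Eq (!(M a' b)) true
      cases h : M a' b
      · rfl
      · exact absurd h hb2
    have e3 : f (Sum.inl a') (Sum.inr b') = true := hb1'
    have e4 : f (Sum.inr b') (Sum.inl a) = true := by
      rw [hf.1 (Sum.inr b') (Sum.inl a) (by simp [completeBipartiteGraph])]
      show Eq (!(M a b')) true
      cases h : M a b'
      · rfl
      · exact absurd h hb2'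
    exact hac (Sum.inl a)
      (Relation.TransGen.tail (Relation.TransGen.tail
        (Relation.TransGen.tail (Relation.TransGen.single e1) e2) e3) e4)
  · intro hRC
    let col : Fin n → Finset (Fin m) := fun b => univ.filter (fun a => M a b = true)
    let h : (Fin m ⊕ Fin n) → ℕ := fun u =>
      match u with
      | Sum.inl a => 2 * (mrow M a).card + 2
      | Sum.inr b => if hcol : (col b).Nonempty
          then 2 * (((col b).image (fun a => (mrow M a).card)).min' (hcol.image _)) + 1
          else 2 * n + 3
    have hdec : ∀ u v, f u v = true → h v < h u := by
      rintro (a | b) (a' | b') hfv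
      · exact absurd hfv (by
          rw [hf.2 _ _ (by simp [completeBipartiteGraph])]; simp)
      · -- inl a → inr b' : M a b' = true
        have hM : M a b' = true := hfv
        have hmem : a ∈ col b' := mem_filter.mpr ⟨mem_univ a, hM⟩
        have hne : (col b').Nonempty := ⟨a, hmem⟩
        show h (Sum.inr b') < h (Sum.inl a)
        have hle : ((col b').image (fun a => (mrow M a).card)).min' (hne.image _)
            ≤ (mrow M a).card := Finset.min'_le _ _ (mem_image_of_mem _ hmem)
        simp only [h, dif_pos hne]
        omega
      · -- inr b → inl a' : M a' b = false
        have hM : M a' b = false := by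
          have h1 := hf.1 (Sum.inr b) (Sum.inl a') (by simp [completeBipartiteGraph])
          rw [h1] at hfv
          show matOf f a' b = false
          cases h : f (Sum.inl a') (Sum.inr b)
          · exact h
          · rw [show f (Sum.inl a') (Sum.inr b) = true from h] at hfv
            exact absurd hfv (by simp)
        show h (Sum.inl a') < h (Sum.inr b)
        by_cases hne : (col b).Nonempty
        · obtain ⟨amin, haminmem, hamineq⟩ :=
            mem_image.mp (Finset.min'_mem ((col b).image (fun a => (mrow M a).card)) (hne.image _))
          have hMa : M amin b = true := (mem_filter.mp haminmem).2
          have hbmem : b ∈ mrow M amin := mem_filter.mpr ⟨mem_univ b, hMa⟩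
          have hbnot : b ∉ mrow M a' := by
            rw [mrow, mem_filter]
            rintro ⟨-, hc⟩
            rw [hM] at hc
            exact Bool.false_ne_true hc
          have hcard : (mrow M a').card < (mrow M amin).card := by
            apply Finset.card_lt_card
            rcases hRC a' amin with hsub | hsub
            · exact Finset.ssubset_iff_subset_ne.mpr ⟨hsub, fun hh => hbnot (hh ▸ hbmem)⟩
            · exact absurd (hsub hbmem) hbnot
          simp only [h, dif_pos hne]
          omega
        · simp only [h, dif_neg hne]
          have : (mrow M a').card ≤ n := by
            calc (mrow M a').card ≤ (univ : Finset (Fin n)).card := Finset.card_le_univ _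
            _ = n := by simp
          omega
      · exact absurd hfv (by
          rw [hf.2 _ _ (by simp [completeBipartiteGraph])]; simp)
    intro v hv
    have htrans : Transitive (fun u v : (Fin m ⊕ Fin n) => h v < h u) :=
      fun x y z hxy hyz => lt_trans hyz hxy
    have hmono := Relation.TransGen.mono (r := fun a b => f a b = true)
      (p := fun u v => h v < h u) (fun a b hab => hdec a b hab) _ _ hv
    haveI : IsTrans _ (fun u v : (Fin m ⊕ Fin n) => h v < h u) := ⟨htrans⟩
    rw [Relation.transGen_eq_self (r := fun u v : (Fin m ⊕ Fin n) => h v < h u)] at hmono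
    exact lt_irrefl _ hmono

lemma card_orient_eq (a0 : Fin m) (b0 : Fin n) :
    Nat.card {f : (Fin m ⊕ Fin n) → (Fin m ⊕ Fin n) → Bool //
        IsOrientation (completeBipartiteGraph (Fin m) (Fin n)) f ∧ OrientAcyclic f ∧
          OrientAcyclic (flipEdge f (Sum.inl a0) (Sum.inr b0))} =
      Nat.card {M : Fin m → Fin n → Bool // RowChain M ∧ RowChain (flipM M a0 b0)} := by
  apply Nat.card_congr
  refine ⟨fun x => ⟨matOf x.1, (acyclic_iff x.2.1).mp x.2.2.1, ?_⟩,
    fun y => ⟨orientOf y.1, isOrientation_orientOf y.1, ?_, ?_⟩, ?_, ?_⟩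
  · rw [← matOf_flipEdge]
    exact (acyclic_iff (isOrientation_flipEdge x.2.1 a0 b0)).mp x.2.2.2
  · exact (acyclic_iff (isOrientation_orientOf y.1)).mpr y.2.1
  · apply (acyclic_iff (isOrientation_flipEdge (isOrientation_orientOf y.1) a0 b0)).mpr
    rw [matOf_flipEdge]
    exact y.2.2
  · intro x
    exact Subtype.ext (orientOf_matOf x.2.1)
  · intro y
    exact Subtype.ext rfl

end Orient

/-! ### Main assembly -/

section Main

variable {m n : ℕ}

/-- Staircase data with the flippability condition at `(a0, b0)`. -/
def Dty (m n : ℕ) (a0 : Fin m) (b0 : Fin n) (k : ℕ) : Type :=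
  {στ : (Fin m → Fin (k+1)) × (Fin n → Fin (k+1)) //
    Hits στ.1 ∧ Hits στ.2 ∧
      ((στ.1 a0 : ℕ) + (στ.2 b0 : ℕ) = k ∨ (στ.1 a0 : ℕ) + (στ.2 b0 : ℕ) = k + 1)}

instance (a0 : Fin m) (b0 : Fin n) (k : ℕ) : Finite (Dty m n a0 b0 k) := by
  unfold Dty; infer_instance

lemma card_chain_sum (a0 : Fin m) (b0 : Fin n) :
    Nat.card {M : Fin m → Fin n → Bool // RowChain M ∧ RowChain (flipM M a0 b0)} =
      ∑ k : Fin (min m n + 1), Nat.card (Dty m n a0 b0 (k : ℕ)) := by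
  classical
  rw [← nat_card_sigma]
  apply Nat.card_congr
  symm
  refine Equiv.ofBijective (fun x =>
    ⟨mkM (x.1 : ℕ) x.2.1.1 x.2.1.2, rowChain_mkM _ _ _,
      (rowChain_flip_iff _ _ _ x.2.2.1 x.2.2.2.1 a0 b0).mpr x.2.2.2.2⟩) ⟨?_, ?_⟩
  · rintro ⟨k, ⟨⟨σ, τ⟩, hσ, hτ, hc⟩⟩ ⟨k', ⟨⟨σ', τ'⟩, hσ', hτ', hc'⟩⟩ h
    have hMeq : mkM (k : ℕ) σ τ = mkM (k' : ℕ) σ' τ' := congrArg Subtype.val h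
    have hkk : (k : ℕ) = (k' : ℕ) := by
      rw [← kOf_mkM (k : ℕ) σ τ hσ hτ, ← kOf_mkM (k' : ℕ) σ' τ' hσ' hτ', hMeq]
    have hk : k = k' := Fin.ext hkk
    subst hk
    have hσeq : σ = σ' := by
      funext a
      apply Fin.ext
      rw [← sigOf_mkM (k : ℕ) σ τ hσ hτ a, ← sigOf_mkM (k : ℕ) σ' τ' hσ' hτ' a, hMeq]
    have hτeq : τ = τ' := by
      funext b
      apply Fin.ext
      rw [← tauOf_mkM (k : ℕ) σ τ hσ hτ b, ← tauOf_mkM (k : ℕ) σ' τ' hσ' hτ' b, hMeq]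
    subst hσeq
    subst hτeq
    rfl
  · rintro ⟨M, hC, hCf⟩
    have hkle : kOf M ≤ min m n := kOf_le_min hC
    set k := kOf M with hk
    let σ : Fin m → Fin (k+1) := fun a => ⟨sigOf M a, by have := sigOf_le M a; omega⟩
    let τ : Fin n → Fin (k+1) := fun b => ⟨tauOf M b, by have := tauOf_le M b; omega⟩
    have hσ : Hits σ := by
      intro j hj
      have hj1 : 1 ≤ (j : ℕ) := by
        rcases Nat.eq_zero_or_pos (j : ℕ) with h0 | h
        · exact absurd (Fin.ext h0) hj
        · exact h
      obtain ⟨a, ha⟩ := hits_sigOf hC (j : ℕ) hj1 (by have := j.isLt; omega)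
      exact ⟨a, Fin.ext ha⟩
    have hτ : Hits τ := by
      intro j hj
      have hj1 : 1 ≤ (j : ℕ) := by
        rcases Nat.eq_zero_or_pos (j : ℕ) with h0 | h
        · exact absurd (Fin.ext h0) hj
        · exact h
      obtain ⟨b, hb⟩ := hits_tauOf hC (j : ℕ) hj1 (by have := j.isLt; omega)
      exact ⟨b, Fin.ext hb⟩
    have hMeq : mkM k σ τ = M := by
      funext a b
      have hiff := mem_iff_kOf hC a b
      show decide (k + 1 ≤ sigOf M a + tauOf M b) = M a b
      cases hMb : M a b
      · apply decide_eq_false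
        intro hle
        exact absurd (hiff.mpr hle) (by rw [hMb]; simp)
      · exact decide_eq_true (hiff.mp hMb)
    have hcond : ((σ a0 : ℕ) + (τ b0 : ℕ) = k ∨ (σ a0 : ℕ) + (τ b0 : ℕ) = k + 1) := by
      apply (rowChain_flip_iff k σ τ hσ hτ a0 b0).mp
      rw [hMeq]
      exact hCf
    refine ⟨⟨⟨k, by omega⟩, ⟨⟨σ, τ⟩, hσ, hτ, hcond⟩⟩, ?_⟩
    exact Subtype.ext hMeq

/-- The filter of admissible pairs. -/
def filt (k : ℕ) : Finset (Fin (k+1) × Fin (k+1)) :=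
  univ.filter (fun p => (p.1 : ℕ) + (p.2 : ℕ) = k ∨ (p.1 : ℕ) + (p.2 : ℕ) = k + 1)

lemma card_Dty_fibers (a0 : Fin m) (b0 : Fin n) (k : ℕ) :
    Nat.card (Dty m n a0 b0 k) =
      ∑ p ∈ filt k, Nat.card (HitsAt a0 p.1) * Nat.card (HitsAt b0 p.2) := by
  classical
  have e : (Σ p : {p : Fin (k+1) × Fin (k+1) //
        (p.1 : ℕ) + (p.2 : ℕ) = k ∨ (p.1 : ℕ) + (p.2 : ℕ) = k + 1},
      HitsAt a0 p.1.1 × HitsAt b0 p.1.2) ≃ Dty m n a0 b0 k := by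
    refine Equiv.ofBijective (fun x =>
      ⟨(x.2.1.1, x.2.2.1), x.2.1.2.1, x.2.2.2.1, by
        show (x.2.1.1 a0 : ℕ) + (x.2.2.1 b0 : ℕ) = k ∨
          (x.2.1.1 a0 : ℕ) + (x.2.2.1 b0 : ℕ) = k + 1
        rw [x.2.1.2.2, x.2.2.2.2]
        exact x.1.2⟩) ⟨?_, ?_⟩
    · rintro ⟨⟨p, hp⟩, ⟨σ, hσ, hi⟩, ⟨τ, hτ, hj⟩⟩ ⟨⟨p', hp'⟩, ⟨σ', hσ', hi'⟩, ⟨τ', hτ', hj'⟩⟩ h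
      have h1 : σ = σ' := congrArg (fun z => (Subtype.val z).1) h
      have h2 : τ = τ' := congrArg (fun z => (Subtype.val z).2) h
      subst h1; subst h2
      have hpp : p = p' := by
        apply Prod.ext
        · rw [← hi, ← hi']
        · rw [← hj, ← hj']
      subst hpp
      rfl
    · rintro ⟨⟨σ, τ⟩, hσ, hτ, hc⟩
      exact ⟨⟨⟨(σ a0, τ b0), hc⟩, ⟨σ, hσ, rfl⟩, ⟨τ, hτ, rfl⟩⟩, rfl⟩
  rw [← Nat.card_congr e, nat_card_sigma]
  simp only [Nat.card_prod]
  exact (Finset.sum_subtype (filt k) (fun p => by simp [filt])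
    (fun p => Nat.card (HitsAt a0 p.1) * Nat.card (HitsAt b0 p.2))).symm

lemma filtk_eq (k : ℕ) :
    (univ : Finset (Fin (k+1) × Fin (k+1))).filter (fun p => (p.1 : ℕ) + (p.2 : ℕ) = k) =
      (univ : Finset (Fin (k+1))).image (fun i : Fin (k+1) =>
        ((i, (⟨k - (i : ℕ), by omega⟩ : Fin (k+1))) : Fin (k+1) × Fin (k+1))) := by
  ext p
  simp only [mem_filter, mem_univ, true_and, mem_image]
  constructor
  · intro h
    refine ⟨p.1, ?_⟩
    have h2 : p.2 = (⟨k - (p.1 : ℕ), by omega⟩ : Fin (k+1)) := by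
      apply Fin.ext
      show (p.2 : ℕ) = k - (p.1 : ℕ)
      omega
    rw [← h2]
  · rintro ⟨i, rfl⟩
    show (i : ℕ) + (k - (i : ℕ)) = k
    have := i.isLt
    omega

lemma filtk1_eq (k : ℕ) :
    (univ : Finset (Fin (k+1) × Fin (k+1))).filter (fun p => (p.1 : ℕ) + (p.2 : ℕ) = k + 1) =
      (univ : Finset (Fin k)).image (fun i : Fin k =>
        (((⟨(i : ℕ) + 1, by omega⟩ : Fin (k+1)), (⟨k - (i : ℕ), by omega⟩ : Fin (k+1)))
          : Fin (k+1) × Fin (k+1))) := by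
  ext p
  simp only [mem_filter, mem_univ, true_and, mem_image]
  constructor
  · intro h
    have hp1 : 1 ≤ (p.1 : ℕ) := by
      have := p.2.isLt
      omega
    have hp1k : (p.1 : ℕ) - 1 < k := by
      have := p.1.isLt
      omega
    refine ⟨⟨(p.1 : ℕ) - 1, hp1k⟩, Prod.ext_iff.mpr ⟨Fin.ext ?_, Fin.ext ?_⟩⟩
    · show (p.1 : ℕ) - 1 + 1 = (p.1 : ℕ)
      omega
    · show k - ((p.1 : ℕ) - 1) = (p.2 : ℕ)
      omega
  · rintro ⟨i, rfl⟩
    show ((i : ℕ) + 1) + (k - (i : ℕ)) = k + 1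
    have := i.isLt
    omega

lemma filt_card (k : ℕ) (hk : 1 ≤ k) : (filt k).card = 2 * k + 1 := by
  classical
  rw [filt, Finset.filter_or, Finset.card_union_of_disjoint (by
    rw [Finset.disjoint_filter]
    intro p _ h1 h2
    omega)]
  rw [filtk_eq, filtk1_eq]
  rw [Finset.card_image_of_injOn (by
    intro i _ i' _ h
    exact (Prod.ext_iff.mp h).1)]
  rw [Finset.card_image_of_injOn (by
    intro i _ i' _ h
    have := (Prod.ext_iff.mp h).1
    have h2 : (i : ℕ) + 1 = (i' : ℕ) + 1 := by
      have := Fin.ext_iff.mp this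
      exact this
    exact Fin.ext (by omega))]
  simp
  omega

lemma filt_zero1_card (k : ℕ) (hk : 1 ≤ k) :
    ((filt k).filter (fun p => p.1 = 0)).card = 1 := by
  classical
  rw [Finset.card_eq_one]
  refine ⟨((0 : Fin (k+1)), (⟨k, by omega⟩ : Fin (k+1))), ?_⟩
  ext p
  simp only [mem_filter, mem_singleton, filt, mem_univ, true_and]
  constructor
  · rintro ⟨hc, h0⟩
    rw [h0] at hc
    simp only [Fin.val_zero, zero_add] at hc
    have hp2 : (p.2 : ℕ) = k := by
      have := p.2.isLt
      omega
    exact Prod.ext_iff.mpr ⟨h0, Fin.ext hp2⟩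
  · rintro rfl
    exact ⟨Or.inl (by simp), rfl⟩

lemma filt_zero2_card (k : ℕ) (hk : 1 ≤ k) :
    ((filt k).filter (fun p => p.2 = 0)).card = 1 := by
  classical
  rw [Finset.card_eq_one]
  refine ⟨((⟨k, by omega⟩ : Fin (k+1)), (0 : Fin (k+1))), ?_⟩
  ext p
  simp only [mem_filter, mem_singleton, filt, mem_univ, true_and]
  constructor
  · rintro ⟨hc, h0⟩
    rw [h0] at hc
    simp only [Fin.val_zero, add_zero] at hc
    have hp1 : (p.1 : ℕ) = k := by
      have := p.1.isLt
      omega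
    exact Prod.ext_iff.mpr ⟨Fin.ext hp1, h0⟩
  · rintro rfl
    exact ⟨Or.inl (by simp), rfl⟩

lemma filt_zero12_card (k : ℕ) (hk : 1 ≤ k) :
    ((filt k).filter (fun p => p.1 = 0 ∧ p.2 = 0)).card = 0 := by
  classical
  rw [Finset.card_eq_zero, Finset.eq_empty_iff_forall_notMem]
  intro p hp
  rw [mem_filter] at hp
  obtain ⟨hc, h1, h2⟩ := hp
  rw [filt, mem_filter, h1, h2] at hc
  simp at hc
  omega

lemma card_Dty_zero (a0 : Fin m) (b0 : Fin n) :
    Nat.card (Dty m n a0 b0 0) = 1 := by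
  rw [Nat.card_eq_one_iff_unique]
  haveI : Subsingleton (Fin (0+1)) := ⟨fun a b => Fin.ext (by omega)⟩
  constructor
  · constructor
    rintro ⟨⟨σ, τ⟩, -⟩ ⟨⟨σ', τ'⟩, -⟩
    apply Subtype.ext
    have h1 : σ = σ' := funext fun a => Subsingleton.elim _ _
    have h2 : τ = τ' := funext fun b => Subsingleton.elim _ _
    rw [Prod.ext_iff]
    exact ⟨h1, h2⟩
  · refine ⟨⟨(fun _ => 0, fun _ => 0), ?_, ?_, Or.inl rfl⟩⟩
    · intro j hj
      exact absurd (Subsingleton.elim j 0) hj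
    · intro j hj
      exact absurd (Subsingleton.elim j 0) hj

lemma card_Dty_eval {m n : ℕ} (j : ℕ) (hm : 1 ≤ m) (hn : 1 ≤ n) (a0 : Fin m) (b0 : Fin n) :
    (Nat.card (Dty m n a0 b0 (j+1)) : ℚ) =
      ((j.factorial : ℚ)) ^ 2 *
        ((2 * ((j : ℚ) + 2) - 3) * (stirling2 (m + 1) (j+2) : ℚ) * (stirling2 (n + 1) (j+2) : ℚ)
          - (((j : ℚ) + 2) - 2) * ((stirling2 (m + 1) (j+2) : ℚ) * (stirling2 n (j+2) : ℚ)
              + (stirling2 m (j+2) : ℚ) * (stirling2 (n + 1) (j+2) : ℚ))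
          - (stirling2 m (j+2) : ℚ) * (stirling2 n (j+2) : ℚ)) := by
  classical
  have h1ne0 : (1 : Fin (j+2)) ≠ 0 := by
    simp [Fin.ext_iff]
  set A : ℚ := (Nat.card (HitsAt a0 (1 : Fin (j+2))) : ℚ) with hA
  set A0 : ℚ := (Nat.card (HitsAt a0 (0 : Fin (j+2))) : ℚ) with hA0def
  set B : ℚ := (Nat.card (HitsAt b0 (1 : Fin (j+2))) : ℚ) with hB
  set B0 : ℚ := (Nat.card (HitsAt b0 (0 : Fin (j+2))) : ℚ) with hB0def
  set Sm : ℚ := (stirling2 m (j+2) : ℚ) with hSm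
  set Sm' : ℚ := (stirling2 (m+1) (j+2) : ℚ) with hSm'
  set Sn : ℚ := (stirling2 n (j+2) : ℚ) with hSn
  set Sn' : ℚ := (stirling2 (n+1) (j+2) : ℚ) with hSn'
  have hA0 : A0 = ((j+1).factorial : ℚ) * Sm := by
    rw [hA0def, card_hitsAt_zero a0 hm]
    push_cast
    rfl
  have hB0 : B0 = ((j+1).factorial : ℚ) * Sn := by
    rw [hB0def, card_hitsAt_zero b0 hn]
    push_cast
    rfl
  have hAsum : A0 + ((j : ℚ) + 1) * A = ((j+1).factorial : ℚ) * Sm' := by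
    have h := sum_card_hitsAt a0 (k := j+1)
    rw [Fin.sum_univ_succ] at h
    have hc : ∀ i : Fin (j+1), Nat.card (HitsAt a0 i.succ)
        = Nat.card (HitsAt a0 (1 : Fin (j+2))) :=
      fun i => card_hitsAt_ne a0 i.succ 1 (Fin.succ_ne_zero i) h1ne0
    rw [Finset.sum_congr rfl (fun i _ => hc i), Finset.sum_const, Finset.card_univ,
      Fintype.card_fin, smul_eq_mul] at h
    rw [hA0def, hA, hSm']
    exact_mod_cast h
  have hBsum : B0 + ((j : ℚ) + 1) * B = ((j+1).factorial : ℚ) * Sn' := by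
    have h := sum_card_hitsAt b0 (k := j+1)
    rw [Fin.sum_univ_succ] at h
    have hc : ∀ i : Fin (j+1), Nat.card (HitsAt b0 i.succ)
        = Nat.card (HitsAt b0 (1 : Fin (j+2))) :=
      fun i => card_hitsAt_ne b0 i.succ 1 (Fin.succ_ne_zero i) h1ne0
    rw [Finset.sum_congr rfl (fun i _ => hc i), Finset.sum_const, Finset.card_univ,
      Fintype.card_fin, smul_eq_mul] at h
    rw [hB0def, hB, hSn']
    exact_mod_cast h
  have hsum : (Nat.card (Dty m n a0 b0 (j+1)) : ℚ)
      = ∑ p ∈ filt (j+1),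
          (A + (if p.1 = 0 then A0 - A else 0)) * (B + (if p.2 = 0 then B0 - B else 0)) := by
    rw [card_Dty_fibers a0 b0 (j+1)]
    push_cast
    apply Finset.sum_congr rfl
    intro p _
    have e1 : (Nat.card (HitsAt a0 p.1) : ℚ) = A + (if p.1 = 0 then A0 - A else 0) := by
      by_cases h1 : p.1 = 0
      · rw [h1, if_pos rfl]
        rw [hA0def]
        ring
      · rw [if_neg h1, add_zero, hA, card_hitsAt_ne a0 p.1 1 h1 h1ne0]
    have e2 : (Nat.card (HitsAt b0 p.2) : ℚ) = B + (if p.2 = 0 then B0 - B else 0) := by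
      by_cases h2 : p.2 = 0
      · rw [h2, if_pos rfl]
        rw [hB0def]
        ring
      · rw [if_neg h2, add_zero, hB, card_hitsAt_ne b0 p.2 1 h2 h1ne0]
    rw [e1, e2]
  have hexp : ∑ p ∈ filt (j+1),
        (A + (if p.1 = 0 then A0 - A else 0)) * (B + (if p.2 = 0 then B0 - B else 0))
      = (2 * (j : ℚ) + 3) * (A * B) + (A0 - A) * B + A * (B0 - B) := by
    have hsplit : ∀ p ∈ filt (j+1),
        (A + (if p.1 = 0 then A0 - A else 0)) * (B + (if p.2 = 0 then B0 - B else 0))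
          = A * B + (if p.1 = 0 then (A0 - A) * B else 0)
            + (if p.2 = 0 then A * (B0 - B) else 0)
            + (if p.1 = 0 ∧ p.2 = 0 then (A0 - A) * (B0 - B) else 0) := by
      intro p _
      by_cases h1 : p.1 = 0 <;> by_cases h2 : p.2 = 0 <;> simp [h1, h2] <;> ring
    rw [Finset.sum_congr rfl hsplit, Finset.sum_add_distrib, Finset.sum_add_distrib,
      Finset.sum_add_distrib, Finset.sum_const]
    rw [← Finset.sum_filter, ← Finset.sum_filter, ← Finset.sum_filter]
    rw [Finset.sum_const, Finset.sum_const, Finset.sum_const]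
    rw [filt_card (j+1) (by omega), filt_zero1_card (j+1) (by omega),
      filt_zero2_card (j+1) (by omega), filt_zero12_card (j+1) (by omega)]
    push_cast
    ring
  have hfact : ((j+1).factorial : ℚ) = ((j : ℚ) + 1) * (j.factorial : ℚ) := by
    rw [Nat.factorial_succ]
    push_cast
    ring
  have hne : ((j : ℚ) + 1) ≠ 0 := by positivity
  have hAq : A = (j.factorial : ℚ) * (Sm' - Sm) := by
    apply mul_left_cancel₀ hne
    rw [hfact] at hAsum hA0
    linear_combination hAsum - hA0
  have hBq : B = (j.factorial : ℚ) * (Sn' - Sn) := by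
    apply mul_left_cancel₀ hne
    rw [hfact] at hBsum hB0
    linear_combination hBsum - hB0
  rw [hfact] at hA0 hB0
  rw [hsum, hexp, hAq, hBq, hA0, hB0]
  ring

end Main



/-- The number `X` of acyclic orientations of `K_{n₁,n₂}` that remain acyclic when the edge
`e = {a,b}` is reversed equals `1 + ∑_{k=2}^{min(n₁,n₂)+1} ((k−2)!)² [(2k−3)S(n₁+1,k)S(n₂+1,k)
− (k−2)(S(n₁+1,k)S(n₂,k) + S(n₁,k)S(n₂+1,k)) − S(n₁,k)S(n₂,k)]`. -/
theorem card_flippable_formula (n₁ n₂ : ℕ) (h₁ : 1 ≤ n₁) (h₂ : 1 ≤ n₂)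
    (a : Fin n₁) (b : Fin n₂) :
    (Nat.card {f : (Fin n₁ ⊕ Fin n₂) → (Fin n₁ ⊕ Fin n₂) → Bool //
        IsOrientation (completeBipartiteGraph (Fin n₁) (Fin n₂)) f ∧ OrientAcyclic f ∧
          OrientAcyclic (flipEdge f (Sum.inl a) (Sum.inr b))} : ℚ) =
      1 + ∑ k ∈ Finset.Icc 2 (min n₁ n₂ + 1),
        ((Nat.factorial (k - 2) : ℚ)) ^ 2 *
          ((2 * (k : ℚ) - 3) * (stirling2 (n₁ + 1) k : ℚ) * (stirling2 (n₂ + 1) k : ℚ)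
            - ((k : ℚ) - 2) * ((stirling2 (n₁ + 1) k : ℚ) * (stirling2 n₂ k : ℚ)
                + (stirling2 n₁ k : ℚ) * (stirling2 (n₂ + 1) k : ℚ))
            - (stirling2 n₁ k : ℚ) * (stirling2 n₂ k : ℚ)) := by
  classical
  rw [card_orient_eq a b, card_chain_sum a b, Fin.sum_univ_succ]
  have h0 : Nat.card (Dty n₁ n₂ a b ((0 : Fin (min n₁ n₂ + 1)) : ℕ)) = 1 := by
    rw [Fin.val_zero]
    exact card_Dty_zero a b
  rw [h0]
  push_cast
  congr 1
  have e1 : ∑ i : Fin (min n₁ n₂),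
        (Nat.card (Dty n₁ n₂ a b ((i.succ : Fin (min n₁ n₂ + 1)) : ℕ)) : ℚ)
      = ∑ t ∈ Finset.range (min n₁ n₂), (Nat.card (Dty n₁ n₂ a b (t + 1)) : ℚ) := by
    rw [← Fin.sum_univ_eq_sum_range
      (fun t => (Nat.card (Dty n₁ n₂ a b (t + 1)) : ℚ)) (min n₁ n₂)]
    apply Finset.sum_congr rfl
    intro i _
    rw [Fin.val_succ]
  rw [e1]
  refine Finset.sum_nbij' (fun t => t + 2) (fun k => k - 2) ?_ ?_ ?_ ?_ ?_
  · intro t ht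
    show t + 2 ∈ Finset.Icc 2 (min n₁ n₂ + 1)
    rw [Finset.mem_Icc]
    rw [Finset.mem_range] at ht
    omega
  · intro k hk
    show k - 2 ∈ Finset.range (min n₁ n₂)
    rw [Finset.mem_range]
    rw [Finset.mem_Icc] at hk
    omega
  · intro t _
    show t + 2 - 2 = t
    omega
  · intro k hk
    show k - 2 + 2 = k
    rw [Finset.mem_Icc] at hk
    omega
  · intro t _
    rw [card_Dty_eval t h₁ h₂ a b]
    simp only [Nat.add_sub_cancel]
    push_cast
    ring
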